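/- arXiv:2405.01785 — 4 statements merged into one kernel-verified Lean document; each statement's English description precedes it below -/
import Mathlib

section
/- Let T ≥ 1 be a natural number, let r : Fin T → ℝ and s : Fin T → ℝ be nonnegative (the received amplitudes in the first and second halves of a Manchester bit period), let h be a nonzero complex number, and let σ > 0. Define P₁(ρ) = (1/(2π))²·∫_0^{2π} ∫_0^{2π} (1/(π·σ²))·exp(−|ρ·e^{iφ} − h·e^{iθ}|²/σ²) dφ dθ and P₀(ρ) = (1/(π·σ²))·exp(−ρ²/σ²). Then log( (∏_{t} P₁(r t) · ∏_{t} P₀(s t)) / (∏_{t} P₀(r t) · ∏_{t} P₁(s t)) ) = ∑_{t} log I₀(2·(r t)·|h|/σ²) − ∑_{t} log I₀(2·(s t)·|h|/σ²), where I₀(x) = (1/π)·∫_0^π exp(x·cos z) dz. -/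
open Real Complex
set_option maxHeartbeats 1000000


lemma contExp (k : ℝ) : Continuous (fun z : ℝ => Real.exp (k * Real.cos z)) := by
  continuity

lemma absSq (a b x y : ℝ) :
  ‖(a:ℂ) * Complex.exp (Complex.I * x) - (b:ℂ) * Complex.exp (Complex.I * y)‖ ^ 2
    = a^2 + b^2 - 2*a*b*Real.cos (x - y) := by
  simp only [mul_comm Complex.I, Complex.exp_mul_I, Real.cos_sub]
  rw [Complex.sq_norm, Complex.normSq_apply]
  simp [Complex.cos_ofReal_re, Complex.sin_ofReal_re]
  nlinarith [Real.sin_sq_add_cos_sq x, Real.sin_sq_add_cos_sq y]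

lemma periodicity (k c : ℝ) :
    (∫ φ in (0:ℝ)..(2*π), Real.exp (k * Real.cos (φ - c)))
      = 2 * ∫ z in (0:ℝ)..π, Real.exp (k * Real.cos z) := by
  have hper : Function.Periodic (fun z : ℝ => Real.exp (k * Real.cos z)) (2*π) := by
    intro x; simp [Real.cos_add_two_pi]
  rw [intervalIntegral.integral_comp_sub_right (fun z => Real.exp (k * Real.cos z)) c]
  have h1 : (∫ φ in (-c)..(-c + 2*π), Real.exp (k * Real.cos φ))
      = ∫ φ in (0:ℝ)..(2*π), Real.exp (k * Real.cos φ) := by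
    have := hper.intervalIntegral_add_eq (-c) 0
    simpa using this
  rw [show (0:ℝ) - c = -c by ring, show (2*π - c) = -c + 2*π by ring, h1]
  have hsplit : (∫ φ in (0:ℝ)..(2*π), Real.exp (k * Real.cos φ))
      = (∫ φ in (0:ℝ)..π, Real.exp (k * Real.cos φ))
        + ∫ φ in π..(2*π), Real.exp (k * Real.cos φ) := by
    rw [intervalIntegral.integral_add_adjacent_intervals] <;>
      exact (contExp k).intervalIntegrable _ _
  have hrefl : (∫ φ in π..(2*π), Real.exp (k * Real.cos φ))
      = ∫ φ in (0:ℝ)..π, Real.exp (k * Real.cos φ) := by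
    have key := intervalIntegral.integral_comp_sub_left (a := (0:ℝ)) (b := π)
      (fun z => Real.exp (k * Real.cos z)) (2*π)
    simp only [sub_zero] at key
    rw [show (2*π - π) = π by ring] at key
    rw [← key]
    apply intervalIntegral.integral_congr
    intro x _
    show Real.exp (k * Real.cos (2*π - x)) = Real.exp (k * Real.cos x)
    rw [show 2*π - x = -(x - 2*π) by ring, Real.cos_neg, Real.cos_sub_two_pi]
  rw [hsplit, hrefl]; ring

noncomputable def Ifun (A σ ρ : ℝ) : ℝ :=
  (1 / π) * ∫ z in (0:ℝ)..π, Real.exp ((2 * ρ * A / σ ^ 2) * Real.cos z)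

lemma Ifun_pos (A σ ρ : ℝ) : 0 < Ifun A σ ρ := by
  unfold Ifun
  have : 0 < ∫ z in (0:ℝ)..π, Real.exp ((2 * ρ * A / σ ^ 2) * Real.cos z) :=
    intervalIntegral.intervalIntegral_pos_of_pos
      ((contExp _).intervalIntegrable _ _) (fun x => Real.exp_pos _) Real.pi_pos
  positivity

lemma P1_fact (h : ℂ) (σ : ℝ) (hσ : 0 < σ) (ρ : ℝ) :
    (1 / (2 * π)) ^ 2 *
        (∫ θ in (0 : ℝ)..(2 * π), ∫ φ in (0 : ℝ)..(2 * π),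
          (1 / (π * σ ^ 2)) *
            Real.exp (-(‖(ρ : ℂ) * Complex.exp (Complex.I * φ)
                - h * Complex.exp (Complex.I * θ)‖ ^ 2) / σ ^ 2))
      = Real.exp (-(‖h‖)^2/σ^2) * Ifun (‖h‖) σ ρ
          * ((1 / (π * σ ^ 2)) * Real.exp (-ρ ^ 2 / σ ^ 2)) := by
  have hσ2 : (σ:ℝ)^2 ≠ 0 := by positivity
  have hπ : (π:ℝ) ≠ 0 := Real.pi_ne_zero
  set A := ‖h‖ with hA
  have hHA : ∀ θ : ℝ, h * Complex.exp (Complex.I * (θ:ℂ))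
      = ((A:ℝ):ℂ) * Complex.exp (Complex.I * ((θ + Complex.arg h : ℝ):ℂ)) := by
    intro θ
    push_cast
    rw [mul_add, Complex.exp_add, mul_comm Complex.I (Complex.arg h:ℂ),
      mul_comm (Complex.exp (Complex.I * (θ:ℂ))), ← mul_assoc,
      Complex.norm_mul_exp_arg_mul_I]
  have inner : ∀ θ : ℝ,
      (∫ φ in (0:ℝ)..(2*π), (1 / (π * σ ^ 2)) *
        Real.exp (-(‖(ρ : ℂ) * Complex.exp (Complex.I * φ)
            - h * Complex.exp (Complex.I * θ)‖ ^ 2) / σ ^ 2))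
      = ((1 / (π * σ ^ 2)) * Real.exp (-(ρ^2 + A^2)/σ^2)) *
          (2 * ∫ z in (0:ℝ)..π, Real.exp ((2*ρ*A/σ^2) * Real.cos z)) := by
    intro θ
    have hint : ∀ φ : ℝ, (1 / (π * σ ^ 2)) *
        Real.exp (-(‖(ρ : ℂ) * Complex.exp (Complex.I * φ)
            - h * Complex.exp (Complex.I * θ)‖ ^ 2) / σ ^ 2)
        = ((1 / (π * σ ^ 2)) * Real.exp (-(ρ^2 + A^2)/σ^2)) *
            Real.exp ((2*ρ*A/σ^2) * Real.cos (φ - (θ + Complex.arg h))) := by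
      intro φ
      rw [hHA θ, absSq, mul_assoc (1 / (π * σ ^ 2)), ← Real.exp_add]
      congr 2
      field_simp
      ring
    simp_rw [hint]
    rw [intervalIntegral.integral_const_mul, periodicity]
  simp_rw [inner]
  rw [intervalIntegral.integral_const]
  unfold Ifun
  rw [show -(ρ^2 + A^2)/σ^2 = -ρ^2/σ^2 + -A^2/σ^2 by field_simp; ring, Real.exp_add]
  simp only [smul_eq_mul, sub_zero]
  field_simp

/-- Exact LLR of a Manchester-coded OOK bit (Theorem 1): the log of the
likelihood ratio built from the on/off conditional densities `P₁`, `P₀`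
equals `∑ₜ log I₀(2 rₜ |h|/σ²) − ∑ₜ log I₀(2 sₜ |h|/σ²)`. -/
theorem ooK_exact_LLR (T : ℕ) (hT : 1 ≤ T) (r s : Fin T → ℝ)
    (hr : ∀ t, 0 ≤ r t) (hs : ∀ t, 0 ≤ s t)
    (h : ℂ) (hh : h ≠ 0) (σ : ℝ) (hσ : 0 < σ)
    (P₁ P₀ : ℝ → ℝ)
    (hP₁ : ∀ ρ : ℝ, P₁ ρ = (1 / (2 * π)) ^ 2 *
        ∫ θ in (0 : ℝ)..(2 * π), ∫ φ in (0 : ℝ)..(2 * π),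
          (1 / (π * σ ^ 2)) *
            Real.exp (-(‖(ρ : ℂ) * Complex.exp (Complex.I * φ)
                - h * Complex.exp (Complex.I * θ)‖ ^ 2) / σ ^ 2))
    (hP₀ : ∀ ρ : ℝ, P₀ ρ = (1 / (π * σ ^ 2)) * Real.exp (-ρ ^ 2 / σ ^ 2)) :
    Real.log (((∏ t, P₁ (r t)) * ∏ t, P₀ (s t)) /
        ((∏ t, P₀ (r t)) * ∏ t, P₁ (s t)))
      = (∑ t, Real.log ((1 / π) * ∫ z in (0 : ℝ)..π,
            Real.exp ((2 * r t * ‖h‖ / σ ^ 2) * Real.cos z)))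
        - ∑ t, Real.log ((1 / π) * ∫ z in (0 : ℝ)..π,
            Real.exp ((2 * s t * ‖h‖ / σ ^ 2) * Real.cos z)) := by
  have hIfun : ∀ ρ : ℝ, ((1 / π) * ∫ z in (0 : ℝ)..π,
      Real.exp ((2 * ρ * ‖h‖ / σ ^ 2) * Real.cos z)) = Ifun (‖h‖) σ ρ :=
    fun ρ => rfl
  simp_rw [hIfun]
  set A := ‖h‖ with hA
  set C := Real.exp (-(A)^2/σ^2) with hC
  have hCpos : 0 < C := Real.exp_pos _
  have key : ∀ ρ : ℝ, P₁ ρ = C * Ifun A σ ρ * P₀ ρ := by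
    intro ρ
    rw [hP₁, hP₀, P1_fact h σ hσ ρ]
  have hP₀pos : ∀ ρ : ℝ, 0 < P₀ ρ := by
    intro ρ; rw [hP₀]
    have := Real.pi_pos
    positivity
  have e1 : ∏ t, P₁ (r t) = C^T * ((∏ t, Ifun A σ (r t)) * ∏ t, P₀ (r t)) := by
    calc ∏ t, P₁ (r t) = ∏ t, (C * Ifun A σ (r t) * P₀ (r t)) :=
          Finset.prod_congr rfl fun t _ => key (r t)
      _ = _ := by
          rw [Finset.prod_mul_distrib, Finset.prod_mul_distrib, Finset.prod_const]
          simp [Finset.card_univ, mul_assoc]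
  have e2 : ∏ t, P₁ (s t) = C^T * ((∏ t, Ifun A σ (s t)) * ∏ t, P₀ (s t)) := by
    calc ∏ t, P₁ (s t) = ∏ t, (C * Ifun A σ (s t) * P₀ (s t)) :=
          Finset.prod_congr rfl fun t _ => key (s t)
      _ = _ := by
          rw [Finset.prod_mul_distrib, Finset.prod_mul_distrib, Finset.prod_const]
          simp [Finset.card_univ, mul_assoc]
  have hIr : ∀ t, Ifun A σ (r t) ≠ 0 := fun t => (Ifun_pos A σ (r t)).ne'
  have hIs : ∀ t, Ifun A σ (s t) ≠ 0 := fun t => (Ifun_pos A σ (s t)).ne'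
  have hPr : (∏ t, P₀ (r t)) ≠ 0 :=
    (Finset.prod_pos fun t _ => hP₀pos (r t)).ne'
  have hPs : (∏ t, P₀ (s t)) ≠ 0 :=
    (Finset.prod_pos fun t _ => hP₀pos (s t)).ne'
  have hprodIr : (∏ t, Ifun A σ (r t)) ≠ 0 :=
    (Finset.prod_pos fun t _ => Ifun_pos A σ (r t)).ne'
  have hprodIs : (∏ t, Ifun A σ (s t)) ≠ 0 :=
    (Finset.prod_pos fun t _ => Ifun_pos A σ (s t)).ne'
  have hCT : (C:ℝ)^T ≠ 0 := pow_ne_zero _ hCpos.ne'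
  have ratio : ((∏ t, P₁ (r t)) * ∏ t, P₀ (s t)) /
      ((∏ t, P₀ (r t)) * ∏ t, P₁ (s t))
      = (∏ t, Ifun A σ (r t)) / (∏ t, Ifun A σ (s t)) := by
    rw [e1, e2]
    field_simp
  rw [ratio, Real.log_div hprodIr hprodIs,
    Real.log_prod (fun t _ => hIr t), Real.log_prod (fun t _ => hIs t)]
end

section
/- For every real number x > 0, (1/π)·∫_0^∞ exp(−2·x·(z/π)²) dz = (1/4)·√(2π/x), and consequently p(x) < (1/4)·√(2π/x), where p(x) = (1/π)·∫_0^π exp(−2·x·sin(z/2)²) dz. -/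
open Real MeasureTheory

/-- Gaussian integral evaluation `(1/π) ∫_0^∞ exp(−2x(z/π)²) dz = (1/4)·√(2π/x)`
and the resulting strict bound `p x < (1/4)·√(2π/x)` for `x > 0`, where
`p x = (1/π) ∫_0^π exp(−2x sin(z/2)²) dz`. -/
theorem p_lt_quarter_sqrt (x : ℝ) (hx : 0 < x) :
    (1 / π) * (∫ z in Set.Ioi (0 : ℝ), Real.exp (-2 * x * (z / π) ^ 2))
        = (1 / 4) * Real.sqrt (2 * π / x) ∧
    (1 / π) * ∫ z in (0 : ℝ)..π, Real.exp (-2 * x * Real.sin (z / 2) ^ 2)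
        < (1 / 4) * Real.sqrt (2 * π / x) := by
  have hπ := Real.pi_pos
  set c : ℝ := 2 * x / π ^ 2 with hc
  have hcpos : 0 < c := by positivity
  have hfun : ∀ z : ℝ, Real.exp (-2 * x * (z / π) ^ 2) = Real.exp (-c * z ^ 2) := by
    intro z
    congr 1
    field_simp [hc]
    rw [hc]; field_simp
  have hint : (∫ z in Set.Ioi (0 : ℝ), Real.exp (-2 * x * (z / π) ^ 2))
      = Real.sqrt (π / c) / 2 := by
    simp_rw [hfun]
    exact integral_gaussian_Ioi c
  -- algebra: (1/π) * (sqrt(π/c)/2) = (1/4) * sqrt(2π/x)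
  have halg : (1 / π) * (Real.sqrt (π / c) / 2) = (1 / 4) * Real.sqrt (2 * π / x) := by
    have h1 : π / c = π ^ 2 * (π / (2 * x)) := by
      field_simp [hc]
      rw [hc]; field_simp
    have h2 : (2 : ℝ) * π / x = 4 * (π / (2 * x)) := by
      field_simp
      ring
    rw [h1, h2, Real.sqrt_mul (by positivity), Real.sqrt_mul (by norm_num : (0:ℝ) ≤ 4),
      Real.sqrt_sq hπ.le, show Real.sqrt 4 = 2 by
        rw [show (4:ℝ) = 2^2 by norm_num, Real.sqrt_sq (by norm_num)]]
    field_simp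
    ring
  have first : (1 / π) * (∫ z in Set.Ioi (0 : ℝ), Real.exp (-2 * x * (z / π) ^ 2))
      = (1 / 4) * Real.sqrt (2 * π / x) := by rw [hint, halg]
  refine ⟨first, ?_⟩
  -- strict inequality
  have hInt : Integrable (fun z : ℝ => Real.exp (-c * z ^ 2)) := integrable_exp_neg_mul_sq hcpos
  -- pointwise bound on [0, π]
  have hmono : (∫ z in (0 : ℝ)..π, Real.exp (-2 * x * Real.sin (z / 2) ^ 2))
      ≤ ∫ z in (0 : ℝ)..π, Real.exp (-c * z ^ 2) := by
    apply intervalIntegral.integral_mono_on hπ.le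
    · exact (((continuous_const.mul ((Real.continuous_sin.comp
          (continuous_id.div_const 2)).pow 2)).rexp)).intervalIntegrable _ _
    · exact hInt.intervalIntegrable
    · intro z hz
      obtain ⟨hz0, hzπ⟩ := hz
      have hsin : z / π ≤ Real.sin (z / 2) := by
        have h := Real.mul_le_sin (x := z / 2) (by positivity) (by linarith)
        have e : 2 / π * (z / 2) = z / π := by ring
        linarith
      have hsq : (z / π) ^ 2 ≤ Real.sin (z / 2) ^ 2 :=
        pow_le_pow_left₀ (by positivity) hsin 2
      have : -2 * x * Real.sin (z / 2) ^ 2 ≤ -c * z ^ 2 := by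
        have h : -2 * x * Real.sin (z / 2) ^ 2 ≤ -2 * x * (z / π) ^ 2 := by nlinarith
        have he : -2 * x * (z / π) ^ 2 = -c * z ^ 2 := by field_simp [hc]; rw [hc]; field_simp
        linarith [he ▸ h]
      exact Real.exp_le_exp.mpr this
  -- split Ioi 0 into Ioc 0 π ∪ Ioi π
  have hsplit : (∫ z in Set.Ioi (0 : ℝ), Real.exp (-c * z ^ 2))
      = (∫ z in Set.Ioc (0 : ℝ) π, Real.exp (-c * z ^ 2))
        + ∫ z in Set.Ioi π, Real.exp (-c * z ^ 2) := by
    rw [← Set.Ioc_union_Ioi_eq_Ioi hπ.le]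
    exact setIntegral_union (Set.Ioc_disjoint_Ioi le_rfl) measurableSet_Ioi
      hInt.integrableOn hInt.integrableOn
  have htail : 0 < ∫ z in Set.Ioi π, Real.exp (-c * z ^ 2) := by
    apply setIntegral_pos_iff_support_of_nonneg_ae (by filter_upwards with z using (Real.exp_pos _).le) hInt.integrableOn |>.mpr
    have : (Function.support fun z : ℝ => Real.exp (-c * z ^ 2)) = Set.univ := by
      ext z; simp [Function.support, (Real.exp_pos _).ne']
    rw [this]
    simpa using measure_Ioi_pos (volume : Measure ℝ).toOpenPosMeasure π |>.trans_eq rfl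
  have hioc : (∫ z in (0 : ℝ)..π, Real.exp (-c * z ^ 2))
      = ∫ z in Set.Ioc (0 : ℝ) π, Real.exp (-c * z ^ 2) :=
    intervalIntegral.integral_of_le hπ.le
  have hlt : (∫ z in (0 : ℝ)..π, Real.exp (-2 * x * Real.sin (z / 2) ^ 2))
      < ∫ z in Set.Ioi (0 : ℝ), Real.exp (-2 * x * (z / π) ^ 2) := by
    simp_rw [hfun]
    rw [hsplit]
    calc (∫ z in (0 : ℝ)..π, Real.exp (-2 * x * Real.sin (z / 2) ^ 2))
        ≤ ∫ z in Set.Ioc (0 : ℝ) π, Real.exp (-c * z ^ 2) := hioc ▸ hmono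
      _ < _ := by linarith
  calc (1 / π) * ∫ z in (0 : ℝ)..π, Real.exp (-2 * x * Real.sin (z / 2) ^ 2)
      < (1 / π) * ∫ z in Set.Ioi (0 : ℝ), Real.exp (-2 * x * (z / π) ^ 2) := by
        apply mul_lt_mul_of_pos_left hlt (by positivity)
    _ = (1 / 4) * Real.sqrt (2 * π / x) := first
end

section
/- For every real number x > 0, I₀(x) ≤ (√(2π)/4)·e^x/√x, and hence log I₀(x) ≤ x + log(√(2π)/4) − (1/2)·log x, where I₀(x) = (1/π)·∫_0^π exp(x·cos z) dz. -/
open Real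

/-- Upper bound (equation (8) of the paper):
`I₀ x ≤ (√(2π)/4) · e^x / √x` and hence
`log I₀ x ≤ x + log (√(2π)/4) − (1/2) · log x` for `x > 0`, where
`I₀ x = (1/π) ∫_0^π exp (x cos z) dz`. -/
theorem besselI0_upper_bound (x : ℝ) (hx : 0 < x) :
    (1 / π) * (∫ z in (0 : ℝ)..π, Real.exp (x * Real.cos z))
        ≤ (Real.sqrt (2 * π) / 4) * Real.exp x / Real.sqrt x ∧
    Real.log ((1 / π) * ∫ z in (0 : ℝ)..π, Real.exp (x * Real.cos z))
        ≤ x + Real.log (Real.sqrt (2 * π) / 4) - (1 / 2) * Real.log x := by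
  have hπ := pi_pos
  set a : ℝ := 2 * x / π ^ 2 with ha
  have hapos : 0 < a := by positivity
  have key : (∫ z in (0:ℝ)..π, Real.exp (x * Real.cos z))
      ≤ Real.exp x * (Real.sqrt (π / a) / 2) := by
    have h1 : (∫ z in (0:ℝ)..π, Real.exp (x * Real.cos z))
        ≤ ∫ z in (0:ℝ)..π, Real.exp x * Real.exp (-a * z ^ 2) := by
      apply intervalIntegral.integral_mono_on hπ.le
      · exact (Continuous.intervalIntegrable (by continuity) _ _)
      · exact (Continuous.intervalIntegrable (by continuity) _ _)
      · intro z hz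
        rw [← Real.exp_add]
        apply Real.exp_le_exp.2
        have hc : Real.cos z ≤ 1 - 2 / π ^ 2 * z ^ 2 :=
          Real.cos_le_one_sub_mul_cos_sq (abs_le.2 ⟨by linarith [hz.1], hz.2⟩)
        have hm := mul_le_mul_of_nonneg_left hc hx.le
        rw [ha]
        have heq : x * (1 - 2 / π ^ 2 * z ^ 2) = x + -(2 * x / π ^ 2) * z ^ 2 := by ring
        linarith [heq ▸ hm]
    have h2 : (∫ z in (0:ℝ)..π, Real.exp (-a * z ^ 2))
        ≤ ∫ z in Set.Ioi (0:ℝ), Real.exp (-a * z ^ 2) := by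
      rw [intervalIntegral.integral_of_le hπ.le]
      apply MeasureTheory.setIntegral_mono_set
      · exact (integrableOn_Ioi_exp_neg_mul_sq_iff.2 hapos)
      · filter_upwards with z using (Real.exp_pos _).le
      · exact Filter.Eventually.of_forall Set.Ioc_subset_Ioi_self
    calc (∫ z in (0:ℝ)..π, Real.exp (x * Real.cos z))
        ≤ ∫ z in (0:ℝ)..π, Real.exp x * Real.exp (-a * z ^ 2) := h1
      _ = Real.exp x * ∫ z in (0:ℝ)..π, Real.exp (-a * z ^ 2) := by
          rw [intervalIntegral.integral_const_mul]
      _ ≤ Real.exp x * (Real.sqrt (π / a) / 2) := by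
          rw [← integral_gaussian_Ioi a]
          exact mul_le_mul_of_nonneg_left h2 (Real.exp_pos _).le
  have s1 : Real.sqrt (2 * π) ^ 2 = 2 * π := Real.sq_sqrt (by positivity)
  have s2 : Real.sqrt x ^ 2 = x := Real.sq_sqrt hx.le
  have hsx : 0 < Real.sqrt x := Real.sqrt_pos.2 hx
  have hs2π : 0 < Real.sqrt (2 * π) := Real.sqrt_pos.2 (by positivity)
  have e1 : (π * Real.sqrt (2 * π) / (2 * Real.sqrt x)) ^ 2 = π / a := by
    rw [div_pow, mul_pow, s1, mul_pow, s2, ha]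
    field_simp
  have e2 : Real.sqrt (π / a) = π * Real.sqrt (2 * π) / (2 * Real.sqrt x) := by
    rw [← e1, Real.sqrt_sq (by positivity)]
  have main : (1 / π) * (∫ z in (0 : ℝ)..π, Real.exp (x * Real.cos z))
      ≤ (Real.sqrt (2 * π) / 4) * Real.exp x / Real.sqrt x := by
    have := mul_le_mul_of_nonneg_left key (le_of_lt (one_div_pos.2 hπ))
    refine this.trans_eq ?_
    rw [e2]; field_simp; ring
  refine ⟨main, ?_⟩
  have hIpos : 0 < (1 / π) * ∫ z in (0 : ℝ)..π, Real.exp (x * Real.cos z) := by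
    apply mul_pos (one_div_pos.2 hπ)
    apply intervalIntegral.intervalIntegral_pos_of_pos_on
      (Continuous.intervalIntegrable (by continuity) _ _) _ hπ
    intro z _; exact Real.exp_pos _
  have hlog := Real.log_le_log hIpos main
  have hRHS : Real.log ((Real.sqrt (2 * π) / 4) * Real.exp x / Real.sqrt x)
      = x + Real.log (Real.sqrt (2 * π) / 4) - (1 / 2) * Real.log x := by
    rw [Real.log_div (by positivity) hsx.ne', Real.log_mul (by positivity) (Real.exp_ne_zero _),
      Real.log_exp, Real.log_sqrt hx.le]
    ring
  linarith [hRHS ▸ hlog]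
end

section
/- Let T ≥ 1, let r : Fin T → ℝ and s : Fin T → ℝ be strictly positive, and let h be a nonzero complex number. Define, for σ > 0, L(σ) = ∑_t log I₀(2·(r t)·|h|/σ²) − ∑_t log I₀(2·(s t)·|h|/σ²), where I₀(x) = (1/π)·∫_0^π exp(x·cos z) dz. Then lim_{σ → 0⁺} (σ²/(2·|h|))·L(σ) = ∑_t r t − ∑_t s t. -/
open Real Complex Filter

noncomputable def I0 (x : ℝ) : ℝ := (1 / π) * ∫ z in (0 : ℝ)..π, Real.exp (x * Real.cos z)

lemma I0_integrable (x a b : ℝ) :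
    IntervalIntegrable (fun z => Real.exp (x * Real.cos z)) MeasureTheory.volume a b :=
  (Real.continuous_exp.comp (continuous_const.mul Real.continuous_cos)).intervalIntegrable a b

lemma I0_le (x : ℝ) (hx : 0 ≤ x) : I0 x ≤ Real.exp x := by
  have h1 : (∫ z in (0 : ℝ)..π, Real.exp (x * Real.cos z)) ≤ ∫ z in (0 : ℝ)..π, Real.exp x := by
    apply intervalIntegral.integral_mono_on Real.pi_pos.le (I0_integrable x 0 π)
      (intervalIntegrable_const)
    intro z _
    exact Real.exp_le_exp.2 (by nlinarith [Real.cos_le_one z])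
  have h2 : (∫ z in (0 : ℝ)..π, Real.exp x) = π * Real.exp x := by
    simp [mul_comm]
  rw [I0]
  rw [h2] at h1
  rw [div_mul_eq_mul_div, one_mul, div_le_iff₀ Real.pi_pos]
  linarith

lemma I0_ge (x : ℝ) (hx : 1 ≤ x) :
    Real.exp (x - 1/2) * (Real.sqrt x)⁻¹ / π ≤ I0 x := by
  have hx0 : 0 < x := lt_of_lt_of_le one_pos hx
  have hsq : 0 < Real.sqrt x := Real.sqrt_pos.2 hx0
  have hs1 : (Real.sqrt x)⁻¹ ≤ 1 := by
    apply inv_le_one_of_one_le₀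
    exact Real.one_le_sqrt.2 hx
  have hs0 : 0 < (Real.sqrt x)⁻¹ := inv_pos.2 hsq
  have key : ∀ z ∈ Set.Icc (0:ℝ) (Real.sqrt x)⁻¹,
      Real.exp (x - 1/2) ≤ Real.exp (x * Real.cos z) := by
    intro z hz
    apply Real.exp_le_exp.2
    have hc : 1 - z ^ 2 / 2 ≤ Real.cos z := Real.one_sub_sq_div_two_le_cos
    have hz2 : z ^ 2 ≤ ((Real.sqrt x)⁻¹) ^ 2 := by
      apply sq_le_sq' (by linarith [hz.1, hs0]) hz.2
    have : ((Real.sqrt x)⁻¹) ^ 2 = x⁻¹ := by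
      rw [← Real.sqrt_inv, Real.sq_sqrt (inv_nonneg.2 hx0.le)]
    rw [this] at hz2
    have hxz : x * z ^ 2 ≤ 1 := by
      calc x * z ^ 2 ≤ x * x⁻¹ := by nlinarith
      _ = 1 := mul_inv_cancel₀ hx0.ne'
    nlinarith
  have h1 : (∫ z in (0:ℝ)..(Real.sqrt x)⁻¹, Real.exp (x - 1/2))
      ≤ ∫ z in (0:ℝ)..(Real.sqrt x)⁻¹, Real.exp (x * Real.cos z) :=
    intervalIntegral.integral_mono_on hs0.le intervalIntegrable_const
      (I0_integrable x 0 _) key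
  have h2 : (∫ z in (0:ℝ)..(Real.sqrt x)⁻¹, Real.exp (x * Real.cos z))
      ≤ ∫ z in (0:ℝ)..π, Real.exp (x * Real.cos z) := by
    apply intervalIntegral.integral_mono_interval le_rfl hs0.le
      (le_trans hs1 (by linarith [Real.pi_gt_three]))
      (Filter.Eventually.of_forall fun z => (Real.exp_pos _).le)
      (I0_integrable x 0 π)
  have h3 : (∫ z in (0:ℝ)..(Real.sqrt x)⁻¹, Real.exp (x - 1/2))
      = (Real.sqrt x)⁻¹ * Real.exp (x - 1/2) := by simp
  rw [I0, div_mul_eq_mul_div, one_mul, div_le_div_iff₀ Real.pi_pos Real.pi_pos]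
  rw [h3] at h1
  nlinarith [Real.pi_pos, Real.exp_pos (x - 1/2), h1.trans h2]

lemma I0_pos (x : ℝ) (hx : 1 ≤ x) : 0 < I0 x :=
  lt_of_lt_of_le (by positivity) (I0_ge x hx)

lemma log_I0_div_tendsto : Tendsto (fun x => Real.log (I0 x) / x) atTop (nhds 1) := by
  have hlog : Tendsto (fun x : ℝ => Real.log x / x) atTop (nhds 0) :=
    Real.isLittleO_log_id_atTop.tendsto_div_nhds_zero
  -- lower bound function
  have hlow : Tendsto (fun x : ℝ => (x - 1/2 - Real.log π - Real.log x / 2) / x) atTop (nhds 1) := by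
    have : Tendsto (fun x : ℝ => 1 - (1/2) / x - Real.log π / x - (Real.log x / x) / 2)
        atTop (nhds (1 - 0 - 0 - 0 / 2)) := by
      exact (((tendsto_const_nhds.sub (tendsto_const_nhds.div_atTop tendsto_id)).sub
        (tendsto_const_nhds.div_atTop tendsto_id)).sub (hlog.div_const 2))
    simp only [sub_zero, zero_div] at this
    apply this.congr'
    filter_upwards [eventually_gt_atTop (0:ℝ)] with x hx
    field_simp
  apply tendsto_of_tendsto_of_tendsto_of_le_of_le' hlow tendsto_const_nhds
  · filter_upwards [eventually_ge_atTop (1:ℝ)] with x hx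
    have hx0 : 0 < x := lt_of_lt_of_le one_pos hx
    have hI := I0_ge x hx
    have hlb : x - 1/2 - Real.log π - Real.log x / 2 ≤ Real.log (I0 x) := by
      have hpos : (0:ℝ) < Real.exp (x - 1/2) * (Real.sqrt x)⁻¹ / π := by positivity
      have hlog2 := Real.log_le_log hpos hI
      rw [Real.log_div (by positivity) Real.pi_ne_zero,
        Real.log_mul (Real.exp_ne_zero _) (by positivity),
        Real.log_exp, Real.log_inv, Real.log_sqrt hx0.le] at hlog2
      linarith
    exact div_le_div_of_nonneg_right hlb hx0.le |>.trans_eq rfl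
  · filter_upwards [eventually_ge_atTop (1:ℝ)] with x hx
    have hx0 : 0 < x := lt_of_lt_of_le one_pos hx
    rw [div_le_one hx0]
    calc Real.log (I0 x) ≤ Real.log (Real.exp x) :=
      Real.log_le_log (I0_pos x hx) (I0_le x hx0.le)
    _ = x := Real.log_exp x

lemma term_tendsto (c H : ℝ) (hc : 0 < c) (hH : 0 < H) :
    Tendsto (fun σ : ℝ => (σ ^ 2 / (2 * H)) * Real.log (I0 (2 * c * H / σ ^ 2)))
      (nhdsWithin 0 (Set.Ioi 0)) (nhds c) := by
  have hx : Tendsto (fun σ : ℝ => 2 * c * H / σ ^ 2) (nhdsWithin 0 (Set.Ioi 0)) atTop := by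
    have h1 : Tendsto (fun σ : ℝ => σ ^ 2) (nhdsWithin (0:ℝ) (Set.Ioi 0))
        (nhdsWithin (0:ℝ) (Set.Ioi 0)) := by
      apply tendsto_nhdsWithin_of_tendsto_nhds_of_eventually_within
      · have := (continuous_pow 2).tendsto' (0:ℝ) 0 (by simp)
        exact this.mono_left nhdsWithin_le_nhds
      · filter_upwards [self_mem_nhdsWithin] with σ hσ
        exact pow_pos (show (0:ℝ) < σ from hσ) 2
    have h2 : Tendsto (fun y : ℝ => 2 * c * H / y) (nhdsWithin (0:ℝ) (Set.Ioi 0)) atTop := by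
      simpa [div_eq_mul_inv] using
        tendsto_inv_nhdsGT_zero.const_mul_atTop (by positivity : (0:ℝ) < 2 * c * H)
    exact h2.comp h1
  have hmain := (log_I0_div_tendsto.comp hx).const_mul c
  rw [mul_one] at hmain
  apply hmain.congr'
  filter_upwards [self_mem_nhdsWithin] with σ hσ
  have hσ0 : (σ:ℝ) ≠ 0 := ne_of_gt hσ
  simp only [Function.comp]
  field_simp

/-- High-SNR limit of the exact LLR (Proposition 1): as `σ → 0⁺`,
`(σ²/(2|h|)) · L σ → ∑ₜ rₜ − ∑ₜ sₜ`, where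
`L σ = ∑ₜ log I₀(2 rₜ |h|/σ²) − ∑ₜ log I₀(2 sₜ |h|/σ²)` and
`I₀ x = (1/π) ∫_0^π exp (x cos z) dz`. -/
theorem llr_high_snr_limit (T : ℕ) (hT : 1 ≤ T) (r s : Fin T → ℝ)
    (hr : ∀ t, 0 < r t) (hs : ∀ t, 0 < s t) (h : ℂ) (hh : h ≠ 0) :
    Tendsto (fun σ : ℝ =>
        (σ ^ 2 / (2 * ‖h‖)) *
          ((∑ t, Real.log ((1 / π) * ∫ z in (0 : ℝ)..π,
              Real.exp ((2 * r t * ‖h‖ / σ ^ 2) * Real.cos z)))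
            - ∑ t, Real.log ((1 / π) * ∫ z in (0 : ℝ)..π,
              Real.exp ((2 * s t * ‖h‖ / σ ^ 2) * Real.cos z))))
      (nhdsWithin 0 (Set.Ioi 0)) (nhds ((∑ t, r t) - ∑ t, s t)) := by
  have hH : 0 < ‖h‖ := norm_pos_iff.mpr hh
  have main := (tendsto_finset_sum Finset.univ
      (fun t _ => term_tendsto (r t) (‖h‖) (hr t) hH)).sub
    (tendsto_finset_sum Finset.univ
      (fun t _ => term_tendsto (s t) (‖h‖) (hs t) hH))
  apply main.congr
  intro σ
  simp only [I0, mul_sub, Finset.mul_sum]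
end
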